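/- For any two n×m real matrices F and G, det(I_m + F^T G) = Σ_P det(F_P) det(G_P), where the sum ranges over all square submatrix patterns P (including the empty pattern, which contributes 1). -/

import Mathlib

open Matrix Finset

section AuxLemmas
open Equiv

theorem aux_det_rows_one {m : ℕ} (M : Matrix (Fin m) (Fin m) ℝ) (J : Finset (Fin m))
    (h1 : ∀ j ∉ J, ∀ a, M j a = (1 : Matrix (Fin m) (Fin m) ℝ) j a) :
    M.det = (M.submatrix (J.orderEmbOfFin rfl) (J.orderEmbOfFin rfl)).det := by
  classical
  set k := J.card
  set e := J.orderEmbOfFin rfl with he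
  set f : Fin k ≃ {x // x ∈ J} := (J.orderIsoOfFin rfl).toEquiv with hf
  have hfe : ∀ b : Fin k, (f b : Fin m) = e b := fun b => J.coe_orderIsoOfFin_apply rfl b
  rw [det_apply', det_apply']
  have split := Finset.sum_filter_add_sum_filter_not Finset.univ
      (fun σ : Perm (Fin m) => ∀ j ∉ J, σ j = j)
      (fun σ => (Perm.sign σ : ℝ) * ∏ j, M (σ j) j)
  rw [← split]
  have hzero : ∑ σ ∈ Finset.univ.filter (fun σ : Perm (Fin m) => ¬ ∀ j ∉ J, σ j = j),
      (Perm.sign σ : ℝ) * ∏ j, M (σ j) j = 0 := by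
    refine Finset.sum_eq_zero fun σ hσ => ?_
    simp only [Finset.mem_filter, Finset.mem_univ, true_and, not_forall] at hσ
    obtain ⟨j0, hj0, hne⟩ := hσ
    have hne' : j0 ≠ σ⁻¹ j0 := fun hc => hne (Perm.eq_inv_iff_eq.mp hc)
    have hz : M (σ (σ⁻¹ j0)) (σ⁻¹ j0) = 0 := by
      rw [show σ (σ⁻¹ j0) = j0 from σ.apply_symm_apply j0, h1 j0 hj0]
      rw [Matrix.one_apply, if_neg hne']
    exact mul_eq_zero_of_right _
      (Finset.prod_eq_zero (f := fun j => M (σ j) j) (Finset.mem_univ (σ⁻¹ j0)) hz)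
  rw [hzero, add_zero]
  -- bijection between Perm (Fin k) and permutations fixing Jᶜ
  refine (Finset.sum_nbij (fun τ : Perm (Fin k) => τ.extendDomain f) ?_ ?_ ?_ ?_).symm
  · intro τ _
    simp only [Finset.mem_filter, Finset.mem_univ, true_and]
    intro j hj
    exact Perm.extendDomain_apply_not_subtype τ f hj
  · intro τ1 _ τ2 _ hτ
    ext b
    have h1' := congr_arg (fun σ : Perm (Fin m) => σ ((f b : Fin m))) hτ
    simp only [Perm.extendDomain_apply_image] at h1'
    have h2 : f (τ1 b) = f (τ2 b) := Subtype.ext h1'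
    have h3 := f.injective h2
    rw [h3]
  · intro σ hσ
    simp only [Finset.coe_filter, Finset.mem_univ, true_and, Set.mem_setOf_eq] at hσ
    have hmem : ∀ x : Fin m, x ∈ J ↔ σ x ∈ J := by
      intro x
      constructor
      · intro hx
        by_contra hc
        have h2 : σ (σ x) = σ x := hσ (σ x) hc
        have h3 : σ x = x := σ.injective h2
        exact hc (h3.symm ▸ hx)
      · intro hx
        by_contra hc
        have h3 : σ x = x := hσ x hc
        exact hc (h3 ▸ hx)
    set τ : Perm (Fin k) := (f.trans (σ.subtypePerm fun x => (hmem x).symm)).trans f.symm with hτ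
    refine ⟨τ, Finset.mem_coe.mpr (Finset.mem_univ τ), ?_⟩
    ext b
    by_cases hb : b ∈ J
    · rw [Perm.extendDomain_apply_subtype τ f hb]
      simp [hτ, Perm.subtypePerm]
    · rw [Perm.extendDomain_apply_not_subtype τ f hb, hσ b hb]
  · intro τ _
    rw [Perm.sign_extendDomain]
    congr 1
    rw [← Finset.prod_mul_prod_compl J (fun j => M (τ.extendDomain f j) j)]
    have hcompl : ∏ j ∈ Jᶜ, M (τ.extendDomain f j) j = 1 := by
      refine Finset.prod_eq_one fun j hj => ?_
      rw [Finset.mem_compl] at hj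
      rw [Perm.extendDomain_apply_not_subtype τ f hj, h1 j hj]
      simp [Matrix.one_apply]
    rw [hcompl, mul_one]
    have hJmap : J = Finset.univ.map (e.toEmbedding) := by
      ext x
      simp only [Finset.mem_map, Finset.mem_univ, true_and]
      constructor
      · intro hx
        obtain ⟨b, hb⟩ := (Set.ext_iff.mp (J.range_orderEmbOfFin rfl) x).mpr hx
        exact ⟨b, hb⟩
      · rintro ⟨b, rfl⟩
        exact J.orderEmbOfFin_mem rfl b
    have step : ∏ j ∈ J, M (τ.extendDomain f j) j
        = ∏ b : Fin k, M (τ.extendDomain f (e b)) (e b) := by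
      rw [Finset.prod_congr hJmap (fun _ _ => rfl), Finset.prod_map]
      rfl
    rw [step]
    refine Finset.prod_congr rfl fun b _ => ?_
    have hEx : τ.extendDomain f (e b) = e (τ b) := by
      rw [← hfe b, Perm.extendDomain_apply_image, hfe]
    rw [hEx]
    rfl

theorem aux_cauchy_binet {n k : ℕ} (A B : Matrix (Fin n) (Fin k) ℝ) :
    (Aᵀ * B).det = ∑ I : Finset (Fin n),
      (if h : I.card = k then
        (A.submatrix (I.orderEmbOfFin h) id).det * (B.submatrix (I.orderEmbOfFin h) id).det
      else 0) := by
  classical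
  -- Step 1: expand det over functions f : Fin k → Fin n
  have rows : (Aᵀ * B) = Matrix.of fun a b => ∑ i, A i a * B i b := by
    ext a b
    simp [Matrix.mul_apply]
  have expand : (Aᵀ * B).det
      = ∑ f : Fin k → Fin n, (∏ a, A (f a) a) * (B.submatrix f id).det := by
    rw [rows]
    have : (Matrix.of fun a b => ∑ i, A i a * B i b).det
        = Matrix.detRowAlternating (fun a : Fin k => ∑ i : Fin n, A i a • fun b => B i b) := by
      congr 1
      ext a b
      simp
    refine this.trans (((Matrix.detRowAlternating :
        (Fin k → ℝ) [⋀^Fin k]→ₗ[ℝ] ℝ).toMultilinearMap.map_sum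
        (g := fun a i => A i a • fun b => B i b)).trans ?_)
    refine Finset.sum_congr rfl fun f _ => ?_
    refine ((Matrix.detRowAlternating :
        (Fin k → ℝ) [⋀^Fin k]→ₗ[ℝ] ℝ).toMultilinearMap.map_smul_univ
        (fun a => A (f a) a) (fun a b => B (f a) b)).trans ?_
    simp only [smul_eq_mul]
    rfl
  rw [expand]
  -- Step 2: non-injective f contribute zero
  have hzero : ∀ f : Fin k → Fin n, ¬ Function.Injective f →
      (∏ a, A (f a) a) * (B.submatrix f id).det = 0 := by
    intro f hf
    rw [Function.not_injective_iff] at hf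
    obtain ⟨a1, a2, hval, hne⟩ := hf
    have : (B.submatrix f id).det = 0 := by
      refine Matrix.det_zero_of_row_eq hne ?_
      ext b
      simp [hval]
    rw [this, mul_zero]
  have split := Finset.sum_filter_add_sum_filter_not Finset.univ
      (fun f : Fin k → Fin n => Function.Injective f)
      (fun f => (∏ a, A (f a) a) * (B.submatrix f id).det)
  have hz2 : ∑ f ∈ Finset.univ.filter (fun f : Fin k → Fin n => ¬ Function.Injective f),
      (∏ a, A (f a) a) * (B.submatrix f id).det = 0 :=
    Finset.sum_eq_zero fun f hf => hzero f (Finset.mem_filter.mp hf).2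
  rw [← split, hz2, add_zero]
  -- Step 3: group injective f by their image
  rw [← Finset.sum_fiberwise_of_maps_to (g := fun f : Fin k → Fin n => Finset.image f Finset.univ)
      (fun f _ => Finset.mem_univ _)]
  refine Finset.sum_congr rfl fun I _ => ?_
  by_cases h : I.card = k
  · rw [dif_pos h]
    set e := I.orderEmbOfFin h with he
    have himg : Finset.image (⇑e) Finset.univ = I := by
      ext x
      simp only [Finset.mem_image, Finset.mem_univ, true_and]
      constructor
      · rintro ⟨b, rfl⟩
        exact I.orderEmbOfFin_mem h b
      · intro hx
        obtain ⟨b, hb⟩ := (Set.ext_iff.mp (I.range_orderEmbOfFin h) x).mpr hx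
        exact ⟨b, hb⟩
    have himgτ : ∀ τ : Perm (Fin k), Finset.image (⇑τ) Finset.univ = Finset.univ := by
      intro τ
      simp
    have key : ∑ f ∈ (Finset.univ.filter (fun f : Fin k → Fin n => Function.Injective f)).filter
          (fun f => Finset.image f Finset.univ = I),
        (∏ a, A (f a) a) * (B.submatrix f id).det
        = ∑ τ : Perm (Fin k),
          ((Perm.sign τ : ℝ) * ∏ a, A (e (τ a)) a) * (B.submatrix (⇑e) id).det := by
      refine (Finset.sum_nbij (fun τ : Perm (Fin k) => ⇑e ∘ ⇑τ) ?_ ?_ ?_ ?_).symm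
      · intro τ _
        simp only [Finset.mem_filter, Finset.mem_univ, true_and]
        refine ⟨e.injective.comp τ.injective, ?_⟩
        rw [← Finset.image_image, himgτ τ, himg]
      · intro τ1 _ τ2 _ hτ
        apply Equiv.ext
        intro b
        exact e.injective (congr_fun hτ b)
      · intro f hf
        simp only [Finset.coe_filter, Finset.mem_filter, Finset.mem_univ, true_and,
          Set.mem_setOf_eq] at hf
        obtain ⟨hinj, himf⟩ := hf
        have hmem : ∀ b, f b ∈ I := fun b => himf ▸ Finset.mem_image_of_mem f (Finset.mem_univ b)
        set g : Fin k → Fin k := fun b => (I.orderIsoOfFin h).symm ⟨f b, hmem b⟩ with hg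
        have hginj : Function.Injective g := by
          intro b1 b2 hb
          simp only [hg] at hb
          have h2 := (I.orderIsoOfFin h).symm.injective hb
          exact hinj (Subtype.ext_iff.mp h2)
        refine ⟨Equiv.ofBijective g (Finite.injective_iff_bijective.mp hginj),
          Finset.mem_coe.mpr (Finset.mem_univ _), ?_⟩
        funext b
        show e (g b) = f b
        rw [hg]
        have : (e ((I.orderIsoOfFin h).symm ⟨f b, hmem b⟩) : Fin n)
            = ((I.orderIsoOfFin h) ((I.orderIsoOfFin h).symm ⟨f b, hmem b⟩) : Fin n) :=
          (I.coe_orderIsoOfFin_apply h _).symm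
        rw [this, OrderIso.apply_symm_apply]
      · intro τ _
        have hsub : B.submatrix (⇑e ∘ ⇑τ) id = (B.submatrix (⇑e) id).submatrix (⇑τ) id := rfl
        rw [hsub, Matrix.det_permute]
        simp only [Function.comp]
        ring
    rw [key, ← Finset.sum_mul]
    congr 1
    rw [det_apply']
    rfl
  · rw [dif_neg h]
    refine Finset.sum_eq_zero fun f hf => ?_
    simp only [Finset.mem_filter, Finset.mem_univ, true_and] at hf
    exact absurd (hf.2 ▸ (Finset.card_image_of_injective Finset.univ hf.1).trans
      (Finset.card_fin k)) h

end AuxLemmas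

theorem det_one_add_transpose_mul {n m : ℕ} (F G : Matrix (Fin n) (Fin m) ℝ) :
    (1 + Fᵀ * G).det =
      ∑ I : Finset (Fin n), ∑ J : Finset (Fin m),
        (if h : I.card = J.card then
          (F.submatrix (I.orderEmbOfFin h) (J.orderEmbOfFin rfl)).det *
          (G.submatrix (I.orderEmbOfFin h) (J.orderEmbOfFin rfl)).det
        else 0) := by
  classical
  rw [Finset.sum_comm]
  have step1 : (1 + Fᵀ * G).det
      = ∑ J : Finset (Fin m), (Matrix.of (J.piecewise (Fᵀ * G) (1 : Matrix (Fin m) (Fin m) ℝ))).det := by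
    have h0 : (1 + Fᵀ * G) = (Fᵀ * G) + (1 : Matrix (Fin m) (Fin m) ℝ) := add_comm _ _
    rw [h0]
    exact (Matrix.detRowAlternating :
      (Fin m → ℝ) [⋀^Fin m]→ₗ[ℝ] ℝ).toMultilinearMap.map_add_univ (Fᵀ * G)
      (1 : Matrix (Fin m) (Fin m) ℝ)
  rw [step1]
  refine Finset.sum_congr rfl fun J _ => ?_
  have hrows : ∀ j ∉ J, ∀ a, (Matrix.of (J.piecewise (Fᵀ * G) (1 : Matrix (Fin m) (Fin m) ℝ))) j a
      = (1 : Matrix (Fin m) (Fin m) ℝ) j a := by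
    intro j hj a
    show J.piecewise (Fᵀ * G) (1 : Matrix (Fin m) (Fin m) ℝ) j a = _
    exact congrFun (Finset.piecewise_eq_of_notMem _ _ _ hj) a
  rw [aux_det_rows_one _ J hrows]
  have hsub : (Matrix.of (J.piecewise (Fᵀ * G) (1 : Matrix (Fin m) (Fin m) ℝ))).submatrix
        ⇑(J.orderEmbOfFin rfl) ⇑(J.orderEmbOfFin rfl)
      = (F.submatrix id ⇑(J.orderEmbOfFin rfl))ᵀ * (G.submatrix id ⇑(J.orderEmbOfFin rfl)) := by
    ext a b
    rw [Matrix.submatrix_apply]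
    show J.piecewise (Fᵀ * G) (1 : Matrix (Fin m) (Fin m) ℝ) _ _ = _
    refine (congrFun (Finset.piecewise_eq_of_mem _ _ _ (J.orderEmbOfFin_mem rfl a)) _).trans ?_
    simp [Matrix.mul_apply]
  rw [hsub, aux_cauchy_binet]
  refine Finset.sum_congr rfl fun I _ => ?_
  by_cases h : I.card = J.card
  · rw [dif_pos h, dif_pos h]
    simp [Matrix.submatrix_submatrix, Function.comp_id, Function.id_comp]
  · rw [dif_neg h, dif_neg h]
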